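/- Given a convergence threshold ε > 0, the proximal-point iteration reaches ε-accuracy after at most log(‖w^{(0)} − w*‖/ε) / log((c + β)/(c − σ_min(Q))) iterations: if c > σ_min(Q), ‖w^{(0)} − w*‖ > ε, and t ≥ log(‖w^{(0)} − w*‖/ε) / log((c + β)/(c − σ_min(Q))), then ‖w^{(t)} − w*‖ ≤ ε. -/

import Mathlib

open Matrix

lemma spec_shift_bound {n : ℕ} {Q : Matrix (Fin n) (Fin n) ℝ} (hQ : Q.IsHermitian)
    (c a : ℝ) (h : ∀ i, |c - hQ.eigenvalues i| ≤ a) (ha : 0 ≤ a)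
    (x : Fin n → ℝ) :
    Real.sqrt ((c • x - Q *ᵥ x) ⬝ᵥ (c • x - Q *ᵥ x)) ≤ a * Real.sqrt (x ⬝ᵥ x) := by
  set b := hQ.eigenvectorBasis with hb
  let toE : (Fin n → ℝ) → EuclideanSpace ℝ (Fin n) := fun v => WithLp.toLp 2 v
  have hnorm : ∀ v : Fin n → ℝ, ‖toE v‖ = Real.sqrt (v ⬝ᵥ v) := by
    intro v
    rw [EuclideanSpace.norm_eq]
    congr 1
    simp [toE, dotProduct, Real.norm_eq_abs, sq_abs, sq]
  set y : Fin n → ℝ := c • x - Q *ᵥ x with hy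
  rw [← hnorm, ← hnorm]
  have key : ∀ j, b.repr (toE y) j = (c - hQ.eigenvalues j) * b.repr (toE x) j := by
    intro j
    rw [b.repr_apply_apply, b.repr_apply_apply]
    have h1 : ∀ v : Fin n → ℝ, (inner ℝ (b j) (toE v) : ℝ) = (b j : Fin n → ℝ) ⬝ᵥ v := by
      intro v
      simp [EuclideanSpace.inner_eq_star_dotProduct]
      exact dotProduct_comm _ _
    rw [h1, h1]
    have hsym : (b j : Fin n → ℝ) ⬝ᵥ (Q *ᵥ x) = (Q *ᵥ (b j : Fin n → ℝ)) ⬝ᵥ x := by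
      rw [dotProduct_mulVec, ← mulVec_transpose]
      congr 1
      rw [show Qᵀ = Q from hQ]
    have hev : Q *ᵥ (b j : Fin n → ℝ) = hQ.eigenvalues j • (b j : Fin n → ℝ) :=
      hQ.mulVec_eigenvectorBasis j
    rw [dotProduct_sub, hsym, hev, dotProduct_smul, smul_dotProduct]
    simp only [smul_eq_mul]
    ring
  have hnorm2 : ∀ z : EuclideanSpace ℝ (Fin n), ‖z‖ ^ 2 = ∑ j, (b.repr z j) ^ 2 := by
    intro z
    rw [← b.repr.norm_map z, EuclideanSpace.norm_eq, Real.sq_sqrt (by positivity)]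
    simp [sq_abs]
  have hsq : ‖toE y‖ ^ 2 ≤ (a * ‖toE x‖) ^ 2 := by
    rw [hnorm2 (toE y), mul_pow, hnorm2 (toE x), Finset.mul_sum]
    apply Finset.sum_le_sum
    intro j _
    rw [key j, mul_pow]
    have h2 : (c - hQ.eigenvalues j) ^ 2 ≤ a ^ 2 := by
      rw [← sq_abs]
      exact pow_le_pow_left₀ (abs_nonneg _) (h j) 2
    exact mul_le_mul_of_nonneg_right h2 (sq_nonneg _)
  calc ‖toE y‖ = Real.sqrt (‖toE y‖ ^ 2) := (Real.sqrt_sq (norm_nonneg _)).symm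
    _ ≤ Real.sqrt ((a * ‖toE x‖) ^ 2) := Real.sqrt_le_sqrt hsq
    _ = a * ‖toE x‖ := Real.sqrt_sq (by positivity)

theorem ppa_iteration_count_bound
    (n : ℕ) (hn : 1 ≤ n)
    (Q : Matrix (Fin n) (Fin n) ℝ) (hQ : Q.PosSemidef)
    (β : ℝ) (hβ : 0 < β) (k : Fin n → ℝ)
    (c : ℝ) (hc : ∀ i, hQ.isHermitian.eigenvalues i ≤ c)
    (σmin : ℝ)
    (hσminmem : ∃ i, hQ.isHermitian.eigenvalues i = σmin)
    (hσminlb : ∀ i, σmin ≤ hQ.isHermitian.eigenvalues i)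
    (w : ℕ → (Fin n → ℝ))
    (hw : ∀ t, w (t + 1) = (β + c)⁻¹ • (k - Q.mulVec (w t) + c • w t))
    (wstar : Fin n → ℝ) (hwstar : wstar = (Q + β • 1)⁻¹.mulVec k)
    (ε : ℝ) (hε : 0 < ε)
    (hcσ : σmin < c)
    (h0 : ε < Real.sqrt ((w 0 - wstar) ⬝ᵥ (w 0 - wstar)))
    (t : ℕ)
    (ht : Real.log (Real.sqrt ((w 0 - wstar) ⬝ᵥ (w 0 - wstar)) / ε) /
        Real.log ((c + β) / (c - σmin)) ≤ (t : ℝ)) :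
    Real.sqrt ((w t - wstar) ⬝ᵥ (w t - wstar)) ≤ ε := by
  -- basic positivity facts
  obtain ⟨i0, hi0⟩ := hσminmem
  have hσ0 : 0 ≤ σmin := hi0 ▸ hQ.eigenvalues_nonneg i0
  have hc0 : 0 < c := lt_of_le_of_lt hσ0 hcσ
  have hβc : 0 < β + c := by linarith
  have hcs : 0 < c - σmin := by linarith
  -- (Q + β•1) is positive definite, hence invertible
  have hone : (β • (1 : Matrix (Fin n) (Fin n) ℝ)).PosDef := by
    rw [posDef_iff_dotProduct_mulVec]
    constructor
    · unfold Matrix.IsHermitian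
      simp
    · intro x hx
      have h1 : star x ⬝ᵥ ((β • (1 : Matrix (Fin n) (Fin n) ℝ)) *ᵥ x) = β * (star x ⬝ᵥ x) := by
        simp [smul_mulVec, dotProduct_smul, smul_eq_mul]
      rw [h1]
      have hxx : 0 < star x ⬝ᵥ x := dotProduct_star_self_pos_iff.mpr hx
      positivity
  have hpd : (Q + β • (1 : Matrix (Fin n) (Fin n) ℝ)).PosDef :=
    Matrix.PosDef.posSemidef_add hQ hone
  have hdet : IsUnit (Q + β • (1 : Matrix (Fin n) (Fin n) ℝ)).det :=
    isUnit_iff_ne_zero.mpr (ne_of_gt hpd.det_pos)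
  have hfix : (Q + β • (1 : Matrix (Fin n) (Fin n) ℝ)) *ᵥ wstar = k := by
    rw [hwstar, mulVec_mulVec, Matrix.mul_nonsing_inv _ hdet, one_mulVec]
  have hk : k = Q *ᵥ wstar + β • wstar := by
    rw [← hfix, add_mulVec, smul_mulVec, one_mulVec]
  -- error recursion
  set e : ℕ → (Fin n → ℝ) := fun s => w s - wstar with he
  have herec : ∀ s, e (s + 1) = (β + c)⁻¹ • (c • e s - Q *ᵥ e s) := by
    intro s
    have h1 : w (s + 1) = (β + c)⁻¹ • (k - Q *ᵥ w s + c • w s) := hw s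
    have expand : k - Q *ᵥ w s + c • w s
        = (β + c) • wstar + (c • (w s - wstar) - Q *ᵥ (w s - wstar)) := by
      rw [hk, mulVec_sub]
      module
    show w (s + 1) - wstar = _
    rw [h1, expand, smul_add, smul_smul, inv_mul_cancel₀ (ne_of_gt hβc), one_smul,
      add_sub_cancel_left]
  -- norm contraction
  set N : (Fin n → ℝ) → ℝ := fun v => Real.sqrt (v ⬝ᵥ v) with hN
  have hNnonneg : ∀ v, 0 ≤ N v := fun v => Real.sqrt_nonneg _
  set ρ : ℝ := (c - σmin) / (β + c) with hρ
  have hρ0 : 0 < ρ := div_pos hcs hβc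
  have hρ1 : ρ < 1 := (div_lt_one hβc).mpr (by linarith)
  have hcontr : ∀ s, N (e (s + 1)) ≤ ρ * N (e s) := by
    intro s
    rw [herec s]
    have hsm : N ((β + c)⁻¹ • (c • e s - Q *ᵥ e s)) = (β + c)⁻¹ * N (c • e s - Q *ᵥ e s) := by
      rw [hN]
      simp only [smul_dotProduct, dotProduct_smul, smul_eq_mul, ← mul_assoc]
      rw [show (β + c)⁻¹ * (β + c)⁻¹ * ((c • e s - Q *ᵥ e s) ⬝ᵥ (c • e s - Q *ᵥ e s))
          = ((β + c)⁻¹)^2 * ((c • e s - Q *ᵥ e s) ⬝ᵥ (c • e s - Q *ᵥ e s)) by ring,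
        Real.sqrt_mul (by positivity), Real.sqrt_sq (by positivity)]
    rw [hsm]
    have hb := spec_shift_bound hQ.isHermitian c (c - σmin) ?habs (le_of_lt hcs) (e s)
    · calc (β + c)⁻¹ * N (c • e s - Q *ᵥ e s) ≤ (β + c)⁻¹ * ((c - σmin) * N (e s)) := by
            apply mul_le_mul_of_nonneg_left hb (by positivity)
        _ = ρ * N (e s) := by rw [hρ]; ring
    · intro i
      rw [abs_of_nonneg (by linarith [hc i])]
      linarith [hσminlb i]
  have hiter : ∀ s, N (e s) ≤ ρ ^ s * N (e 0) := by
    intro s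
    induction s with
    | zero => simp
    | succ m ih =>
      calc N (e (m + 1)) ≤ ρ * N (e m) := hcontr m
        _ ≤ ρ * (ρ ^ m * N (e 0)) := mul_le_mul_of_nonneg_left ih (le_of_lt hρ0)
        _ = ρ ^ (m + 1) * N (e 0) := by ring
  -- arithmetic conclusion
  set D : ℝ := N (e 0) with hD
  have hDpos : 0 < D := lt_trans hε h0
  set B : ℝ := (c + β) / (c - σmin) with hB
  have hB1 : 1 < B := (one_lt_div hcs).mpr (by linarith)
  have hLpos : 0 < Real.log B := Real.log_pos hB1
  have h1 : Real.log (D / ε) ≤ t * Real.log B := by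
    rw [div_le_iff₀ hLpos] at ht
    linarith
  have h2 : D / ε ≤ B ^ t := by
    have := Real.exp_le_exp.mpr h1
    rw [Real.exp_log (by positivity)] at this
    calc D / ε ≤ Real.exp (t * Real.log B) := this
      _ = B ^ t := by
          rw [← Real.log_pow, Real.exp_log (by positivity)]
  have hρB : ρ = B⁻¹ := by
    rw [hρ, hB, inv_div, add_comm β c]
  have hfin : ρ ^ t * D ≤ ε := by
    rw [hρB, inv_pow]
    rw [div_le_iff₀ hε] at h2
    have hBt : 0 < B ^ t := by positivity
    rw [inv_mul_le_iff₀ hBt]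
    calc D ≤ ε * B ^ t := by linarith
      _ = B ^ t * ε := by ring
  calc N (e t) ≤ ρ ^ t * D := hiter t
    _ ≤ ε := hfin
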